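/- Consider a StackMST(γ,Δ) game whose red tree T, rooted at some vertex v0, has height h ≥ 1 (every vertex is at depth at most h from v0). Then there exists a feasible set F of blue edges (i.e., Σ_{e∈F} γ(e) ≤ Δ) such that (V, F) is a forest of stars and 2h·r(F) ≥ r*. -/

import Mathlib

namespace StackMST

variable {V : Type*}

/-- Sum of an edge-weight function over a set of edges. -/
noncomputable def esum (w : Sym2 V → ℝ) (s : Set (Sym2 V)) : ℝ := ∑ᶠ e ∈ s, w e

/-- `M` is a spanning tree of `G`. -/
def IsSpanningTreeOf (G M : SimpleGraph V) : Prop := M ≤ G ∧ M.IsTree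

/-- Total weight of `M`, where red edges (the edges of `T`) are weighted by `c`
and all other (blue) edges are weighted by `p`. -/
noncomputable def weight (T : SimpleGraph V) (c p : Sym2 V → ℝ) (M : SimpleGraph V) : ℝ :=
  esum c (M.edgeSet ∩ T.edgeSet) + esum p (M.edgeSet \ T.edgeSet)

/-- Total price of the blue edges of `M`. -/
noncomputable def blueRevenue (T : SimpleGraph V) (p : Sym2 V → ℝ) (M : SimpleGraph V) : ℝ :=
  esum p (M.edgeSet \ T.edgeSet)

/-- The leader's revenue once `F` and `p` are fixed: the follower selects a
minimum-weight spanning tree of `T ⊔ F` and, among those, one maximizing the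
total price of the blue edges it contains. -/
noncomputable def followerRevenue (T : SimpleGraph V) (c : Sym2 V → ℝ)
    (F : SimpleGraph V) (p : Sym2 V → ℝ) : ℝ :=
  sSup {r | ∃ M : SimpleGraph V, IsSpanningTreeOf (T ⊔ F) M ∧
    (∀ M' : SimpleGraph V, IsSpanningTreeOf (T ⊔ F) M' →
        weight T c p M ≤ weight T c p M') ∧
    r = blueRevenue T p M}

/-- `F` is a set of blue edges: none of its edges is a red edge. -/
def IsBlueSet (T F : SimpleGraph V) : Prop := F ≤ Tᶜ

/-- `r(F)`: the best revenue the leader can obtain from the activated set `F`. -/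
noncomputable def revenueOf (T : SimpleGraph V) (c : Sym2 V → ℝ) (F : SimpleGraph V) : ℝ :=
  sSup {r | ∃ p : Sym2 V → ℝ, (∀ e ∈ F.edgeSet, 0 ≤ p e) ∧ r = followerRevenue T c F p}

/-- Optimal revenue `r*(T, c)` of the StackMST(0,0) game on the red tree `T`. -/
noncomputable def optRevenue (T : SimpleGraph V) (c : Sym2 V → ℝ) : ℝ :=
  sSup {r | ∃ (F : SimpleGraph V) (p : Sym2 V → ℝ), IsBlueSet T F ∧
    (∀ e ∈ F.edgeSet, 0 ≤ p e) ∧ r = followerRevenue T c F p}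

/-- Total cost `c(T)` of the red edges. -/
noncomputable def redCost (T : SimpleGraph V) (c : Sym2 V → ℝ) : ℝ := esum c T.edgeSet

/-- Optimal revenue of the budgeted game StackMST(γ, Δ). -/
noncomputable def gammaOptRevenue (T : SimpleGraph V) (c γ : Sym2 V → ℝ) (Δ : ℝ) : ℝ :=
  sSup {r | ∃ F : SimpleGraph V, IsBlueSet T F ∧ esum γ F.edgeSet ≤ Δ ∧
    r = revenueOf T c F}

end StackMST

namespace StackMST

/-- A simple graph is a forest of stars if there is a set `C` of centers such that
every edge joins a center to a non-center and every non-center vertex has at most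
one neighbour. -/
def IsForestOfStars {V : Type*} (F : SimpleGraph V) : Prop :=
  ∃ C : Set V, (∀ u v : V, F.Adj u v → (u ∈ C ↔ v ∉ C)) ∧
    (∀ v : V, v ∉ C → (F.neighborSet v).Subsingleton)

end StackMST

open StackMST

namespace StackMSTProof
open StackMST SimpleGraph
set_option linter.unusedSectionVars false
set_option linter.unusedVariables false
variable {V : Type*} [Finite V]

lemma esum_eq_sum (w : Sym2 V → ℝ) (s : Set (Sym2 V)) :
    esum w s = ∑ e ∈ s.toFinite.toFinset, w e := by
  rw [esum, ← finsum_mem_coe_finset]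
  congr 1
  simp

lemma esum_empty (w : Sym2 V → ℝ) : esum w (∅ : Set (Sym2 V)) = 0 := by
  rw [esum, finsum_mem_empty]

lemma esum_nonneg {w : Sym2 V → ℝ} {s : Set (Sym2 V)} (h : ∀ e ∈ s, 0 ≤ w e) :
    0 ≤ esum w s := by
  rw [esum_eq_sum]
  exact Finset.sum_nonneg fun e he => h e (by simpa using he)

lemma esum_mono {w : Sym2 V → ℝ} {s t : Set (Sym2 V)} (hsub : s ⊆ t)
    (h : ∀ e ∈ t, 0 ≤ w e) : esum w s ≤ esum w t := by
  rw [esum_eq_sum, esum_eq_sum]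
  apply Finset.sum_le_sum_of_subset_of_nonneg
  · intro e he; simp only [Set.Finite.mem_toFinset] at *; exact hsub he
  · intro e he _; exact h e (by simpa using he)

open scoped Classical in
/-- Combined weight function. -/
noncomputable def wt (T : SimpleGraph V) (c p : Sym2 V → ℝ) (e : Sym2 V) : ℝ :=
  if e ∈ T.edgeSet then c e else p e

open scoped Classical in
lemma weight_eq_sum (T : SimpleGraph V) (c p : Sym2 V → ℝ) (M : SimpleGraph V) :
    weight T c p M = ∑ e ∈ M.edgeSet.toFinite.toFinset, wt T c p e := by
  rw [weight, esum_eq_sum, esum_eq_sum,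
    ← Finset.sum_filter_add_sum_filter_not M.edgeSet.toFinite.toFinset (· ∈ T.edgeSet)]
  congr 1
  · have h1 : (M.edgeSet ∩ T.edgeSet).toFinite.toFinset
        = M.edgeSet.toFinite.toFinset.filter (· ∈ T.edgeSet) := by
      ext e; simp [Set.Finite.mem_toFinset]
    rw [h1]
    apply Finset.sum_congr rfl
    intro e he
    simp only [Finset.mem_filter] at he
    rw [wt, if_pos he.2]
  · have h1 : (M.edgeSet \ T.edgeSet).toFinite.toFinset
        = M.edgeSet.toFinite.toFinset.filter (¬ · ∈ T.edgeSet) := by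
      ext e; simp [Set.Finite.mem_toFinset]
    rw [h1]
    apply Finset.sum_congr rfl
    intro e he
    simp only [Finset.mem_filter] at he
    rw [wt, if_neg he.2]

/-- Weight after swapping one edge. -/
lemma weight_swap (T : SimpleGraph V) (c p : Sym2 V → ℝ) {M M' : SimpleGraph V}
    {e f : Sym2 V} (he : e ∈ M.edgeSet) (hf : f ∉ M.edgeSet)
    (hM' : M'.edgeSet = (M.edgeSet \ {e}) ∪ {f}) :
    weight T c p M' = weight T c p M - wt T c p e + wt T c p f := by
  classical
  rw [weight_eq_sum, weight_eq_sum]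
  have hef : e ≠ f := fun h => hf (h ▸ he)
  have h1 : M'.edgeSet.toFinite.toFinset
      = insert f (M.edgeSet.toFinite.toFinset.erase e) := by
    ext x
    simp only [Set.Finite.mem_toFinset, hM', Set.mem_union, Set.mem_diff,
      Set.mem_singleton_iff, Finset.mem_insert, Finset.mem_erase,
      Set.Finite.mem_toFinset]
    tauto
  rw [h1, Finset.sum_insert (by simp [hf]), Finset.sum_erase_eq_sub (by simpa using he)]
  ring

lemma exists_crossing_edge {G : SimpleGraph V} {S : Set V} :
    ∀ {u v : V} (W : G.Walk u v), u ∈ S → v ∉ S →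
    ∃ (x y : V) (_ : G.Adj x y) (W1 : G.Walk u x) (W2 : G.Walk y v),
      x ∈ S ∧ y ∉ S ∧ W.edges = W1.edges ++ s(x, y) :: W2.edges := by
  intro u v W
  induction W with
  | nil => intro hu hv; exact absurd hu hv
  | @cons a b c h W ih =>
    intro hu hv
    by_cases hb : b ∈ S
    · obtain ⟨x, y, hxy, W1, W2, hx, hy, hE⟩ := ih hb hv
      exact ⟨x, y, hxy, Walk.cons h W1, W2, hx, hy, by simp [hE]⟩
    · exact ⟨a, b, h, Walk.nil, W, hu, hb, by simp⟩

lemma reach_split {N : SimpleGraph V} {a b : V} :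
    ∀ {z w : V} (_ : N.Walk z w),
      (N.deleteEdges {s(a,b)}).Reachable z w ∨
      (N.deleteEdges {s(a,b)}).Reachable z a ∨ (N.deleteEdges {s(a,b)}).Reachable z b := by
  intro z w W
  induction W with
  | nil => exact Or.inl (Reachable.refl _)
  | @cons x y w h W ih =>
    by_cases he : s(x, y) = s(a, b)
    · rw [Sym2.eq_iff] at he
      rcases he with ⟨rfl, rfl⟩ | ⟨rfl, rfl⟩
      · exact Or.inr (Or.inl (Reachable.refl _))
      · exact Or.inr (Or.inr (Reachable.refl _))
    · have hxy : (N.deleteEdges {s(a,b)}).Adj x y := by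
        rw [deleteEdges_adj]
        exact ⟨h, by simpa using he⟩
      rcases ih with H | H | H
      · exact Or.inl (hxy.reachable.trans H)
      · exact Or.inr (Or.inl (hxy.reachable.trans H))
      · exact Or.inr (Or.inr (hxy.reachable.trans H))

lemma swap_isTree {N : SimpleGraph V} (hN : N.IsTree) {a b c d : V}
    (hab : N.Adj a b) (hcd : c ≠ d) (hne : s(c,d) ∉ N.edgeSet)
    (hsep : ¬(N.deleteEdges {s(a,b)}).Reachable c d) :
    (N.deleteEdges {s(a,b)} ⊔ fromEdgeSet {s(c,d)}).IsTree ∧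
    (N.deleteEdges {s(a,b)} ⊔ fromEdgeSet {s(c,d)}).edgeSet
      = (N.edgeSet \ {s(a,b)}) ∪ {s(c,d)} := by
  set N0 := N.deleteEdges {s(a,b)} with hN0
  set N' := N0 ⊔ fromEdgeSet {s(c,d)} with hN'
  have hEdge : N'.edgeSet = (N.edgeSet \ {s(a,b)}) ∪ {s(c,d)} := by
    rw [hN', edgeSet_sup, hN0, edgeSet_deleteEdges, edgeSet_fromEdgeSet]
    congr 1
    ext e
    simp only [Set.mem_diff, Set.mem_singleton_iff, Set.mem_setOf_eq]
    constructor
    · rintro ⟨rfl, -⟩; rfl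
    · rintro rfl; exact ⟨rfl, by simp [Sym2.isDiag_iff_proj_eq, hcd]⟩
  refine ⟨⟨?_, ?_⟩, hEdge⟩
  · -- connected
    have step1 : ∀ z : V, N0.Reachable z a ∨ N0.Reachable z b := by
      intro z
      obtain ⟨W⟩ := hN.isConnected.preconnected z a
      rcases reach_split W with H | H | H
      · exact Or.inl H
      · exact Or.inl H
      · exact Or.inr H
    have step2 : ∀ z : V, N0.Reachable z c ∨ N0.Reachable z d := by
      have hc := step1 c
      have hd := step1 d
      intro z
      rcases hc with hc | hc <;> rcases hd with hd | hd
      · exact absurd (hc.trans hd.symm) hsep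
      · rcases step1 z with H | H
        · exact Or.inl (H.trans hc.symm)
        · exact Or.inr (H.trans hd.symm)
      · rcases step1 z with H | H
        · exact Or.inr (H.trans hd.symm)
        · exact Or.inl (H.trans hc.symm)
      · exact absurd (hc.trans hd.symm) hsep
    have hmono : N0 ≤ N' := le_sup_left
    have hadjcd : N'.Adj c d := by
      rw [hN', sup_adj, fromEdgeSet_adj]
      exact Or.inr ⟨rfl, hcd⟩
    have step3 : ∀ z : V, N'.Reachable z c := by
      intro z
      rcases step2 z with H | H
      · exact H.mono hmono
      · exact (H.mono hmono).trans hadjcd.symm.reachable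
    rw [connected_iff]
    refine ⟨fun x y => (step3 x).trans (step3 y).symm, hN.isConnected.nonempty⟩
  · -- acyclic
    intro v cyc hcyc
    by_cases hm : s(c,d) ∈ cyc.edges
    · have := (adj_and_reachable_delete_edges_iff_exists_cycle.mpr ⟨v, cyc, hcyc, hm⟩).2
      apply hsep
      refine this.mono ?_
      intro x y hxy
      rw [deleteEdges_adj] at hxy
      obtain ⟨hxy1, hxy2⟩ := hxy
      rw [hN', sup_adj] at hxy1
      rcases hxy1 with H | H
      · exact H
      · exact absurd (by rw [fromEdgeSet_adj] at H; exact H.1) hxy2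
    · have hsub : ∀ e ∈ cyc.edges, e ∈ N.edgeSet := by
        intro e he
        have := cyc.edges_subset_edgeSet he
        rw [hEdge] at this
        rcases this with H | H
        · exact H.1
        · rw [Set.mem_singleton_iff] at H
          exact absurd (H ▸ he) hm
      exact hN.IsAcyclic (cyc.transfer N hsub) (hcyc.transfer hsub)

lemma dist_add_one_le_length {N : SimpleGraph V} {u v0 v : V} (P : N.Walk u v0)
    (hv : v ∈ P.support) (hne : v ≠ u) : N.dist v v0 + 1 ≤ P.length := by
  classical
  have hsplit : (P.takeUntil v hv).append (P.dropUntil v hv) = P := P.take_spec hv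
  have hlen : (P.takeUntil v hv).length + (P.dropUntil v hv).length = P.length := by
    have := congrArg Walk.length hsplit
    rwa [Walk.length_append] at this
  have h1 : N.dist v v0 ≤ (P.dropUntil v hv).length := dist_le _
  have h2 : 1 ≤ (P.takeUntil v hv).length := by
    rcases Nat.eq_zero_or_pos (P.takeUntil v hv).length with h | h
    · exact absurd (Walk.eq_of_length_eq_zero h) hne.symm
    · exact h
  omega

lemma adj_dist_succ {N : SimpleGraph V} (hcon : N.Connected) (v0 : V) {u v : V}
    (h : N.Adj u v) : N.dist v0 v ≤ N.dist v0 u + 1 := by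
  obtain ⟨P, _, hPl⟩ := (hcon.preconnected v0 u).exists_path_of_dist
  have := dist_le (P.append (Walk.cons h Walk.nil))
  rwa [Walk.length_append, Walk.length_cons, Walk.length_nil, hPl] at this

lemma tree_adj_dist_ne {N : SimpleGraph V} (hN : N.IsTree) (v0 : V) {u v : V}
    (h : N.Adj u v) : N.dist v0 u ≠ N.dist v0 v := by
  intro heq
  obtain ⟨P, hP, hPl⟩ := (hN.isConnected.preconnected u v0).exists_path_of_dist
  have hvP : v ∉ P.support := by
    intro hv
    have h1 := dist_add_one_le_length P hv h.ne'
    rw [hPl, show N.dist v v0 = N.dist v0 v from dist_comm, show N.dist u v0 = N.dist v0 u from dist_comm, ← heq] at h1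
    omega
  obtain ⟨Q, hQp, hQl⟩ := (hN.isConnected.preconnected v v0).exists_path_of_dist
  have huniq := (hN.existsUnique_path v v0).unique (hP.cons hvP (h := h.symm)) hQp
  have hlen := congrArg Walk.length huniq
  rw [Walk.length_cons, hPl, hQl, show N.dist u v0 = N.dist v0 u from dist_comm, show N.dist v v0 = N.dist v0 v from dist_comm, ← heq] at hlen
  omega

lemma tree_parent_unique {N : SimpleGraph V} (hN : N.IsTree) (v0 : V) {u u' v : V}
    (h : N.Adj u v) (h' : N.Adj u' v)
    (hd : N.dist v0 u + 1 = N.dist v0 v) (hd' : N.dist v0 u' + 1 = N.dist v0 v) :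
    u = u' := by
  obtain ⟨P, hP, hPl⟩ := (hN.isConnected.preconnected u v0).exists_path_of_dist
  obtain ⟨P', hP', hPl'⟩ := (hN.isConnected.preconnected u' v0).exists_path_of_dist
  have hvP : v ∉ P.support := by
    intro hv
    have h1 := dist_add_one_le_length P hv h.ne'
    rw [hPl, show N.dist v v0 = N.dist v0 v from dist_comm, show N.dist u v0 = N.dist v0 u from dist_comm] at h1
    omega
  have hvP' : v ∉ P'.support := by
    intro hv
    have h1 := dist_add_one_le_length P' hv h'.ne'
    rw [hPl', show N.dist v v0 = N.dist v0 v from dist_comm, show N.dist u' v0 = N.dist v0 u' from dist_comm] at h1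
    omega
  have huniq := (hN.existsUnique_path v v0).unique
    (hP.cons hvP (h := h.symm)) (hP'.cons hvP' (h := h'.symm))
  have hs := congrArg Walk.support huniq
  rw [Walk.support_cons, Walk.support_cons] at hs
  have hs2 : P.support = P'.support := by injection hs
  rw [P.support_eq_cons, P'.support_eq_cons] at hs2
  injection hs2

/-- The edges of `E'` whose lower endpoint has depth satisfying `Q`. -/
def parentSet (M : SimpleGraph V) (v0 : V) (E' : Set (Sym2 V)) (Q : ℕ → Prop) :
    Set (Sym2 V) :=
  {e | e ∈ E' ∧ ∃ x y, e = s(x, y) ∧ M.Adj x y ∧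
    M.dist v0 x + 1 = M.dist v0 y ∧ Q (M.dist v0 x)}

lemma parentSet_subset (M : SimpleGraph V) (v0 : V) (E' : Set (Sym2 V)) (Q : ℕ → Prop) :
    parentSet M v0 E' Q ⊆ E' := fun _ he => he.1

lemma parentSet_union {M : SimpleGraph V} (hM : M.IsTree) (v0 : V) {E' : Set (Sym2 V)}
    (hE' : E' ⊆ M.edgeSet) :
    E' = parentSet M v0 E' Even ∪ parentSet M v0 E' (¬ Even ·) := by
  apply Set.Subset.antisymm
  · intro e he
    induction e with
    | _ x y =>
      have hadj : M.Adj x y := (M.mem_edgeSet).mp (hE' he)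
      have hne := tree_adj_dist_ne hM v0 hadj
      rcases Nat.lt_or_ge (M.dist v0 x) (M.dist v0 y) with hlt | hge
      · have hsucc : M.dist v0 x + 1 = M.dist v0 y := by
          have := adj_dist_succ hM.isConnected v0 hadj
          omega
        by_cases hq : Even (M.dist v0 x)
        · exact Or.inl ⟨he, x, y, rfl, hadj, hsucc, hq⟩
        · exact Or.inr ⟨he, x, y, rfl, hadj, hsucc, hq⟩
      · have hsucc : M.dist v0 y + 1 = M.dist v0 x := by
          have := adj_dist_succ hM.isConnected v0 hadj.symm
          omega
        by_cases hq : Even (M.dist v0 y)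
        · exact Or.inl ⟨he, y, x, Sym2.eq_swap, hadj.symm, hsucc, hq⟩
        · exact Or.inr ⟨he, y, x, Sym2.eq_swap, hadj.symm, hsucc, hq⟩
  · rintro e (he | he) <;> exact he.1

lemma parentSet_forestOfStars {M : SimpleGraph V} (hM : M.IsTree) (v0 : V)
    (E' : Set (Sym2 V)) (Q : ℕ → Prop) (hQ : ∀ n, Q n → ¬ Q (n + 1)) :
    IsForestOfStars (fromEdgeSet (parentSet M v0 E' Q)) := by
  refine ⟨{z | Q (M.dist v0 z)}, ?_, ?_⟩
  · intro u v huv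
    rw [fromEdgeSet_adj] at huv
    obtain ⟨⟨-, x, y, hxy, hadj, hsucc, hq⟩, hne⟩ := huv
    rw [Sym2.eq_iff] at hxy
    rcases hxy with ⟨rfl, rfl⟩ | ⟨rfl, rfl⟩
    · simp only [Set.mem_setOf_eq]
      constructor
      · intro _; rw [← hsucc]; exact hQ _ hq
      · intro _; exact hq
    · simp only [Set.mem_setOf_eq]
      constructor
      · intro hvq; exact absurd hvq (by rw [← hsucc]; exact hQ _ hq)
      · intro hnu; exact absurd hq hnu
  · intro v hv w hw w' hw'
    simp only [mem_neighborSet, fromEdgeSet_adj] at hw hw'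
    obtain ⟨⟨-, x, y, hxy, hadj, hsucc, hq⟩, hnevw⟩ := hw
    obtain ⟨⟨-, x', y', hxy', hadj', hsucc', hq'⟩, hnevw'⟩ := hw'
    rw [Sym2.eq_iff] at hxy hxy'
    have h1 : M.Adj w v ∧ M.dist v0 w + 1 = M.dist v0 v := by
      rcases hxy with ⟨rfl, rfl⟩ | ⟨rfl, rfl⟩
      · exact absurd hq hv
      · exact ⟨hadj, hsucc⟩
    have h2 : M.Adj w' v ∧ M.dist v0 w' + 1 = M.dist v0 v := by
      rcases hxy' with ⟨rfl, rfl⟩ | ⟨rfl, rfl⟩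
      · exact absurd hq' hv
      · exact ⟨hadj', hsucc'⟩
    exact tree_parent_unique hM v0 h1.1 h2.1 h1.2 h2.2

lemma even_or : (∀ n, Even n → ¬ Even (n + 1)) ∧ (∀ n, (¬ Even ·) n → ¬ (¬ Even ·) (n + 1)) := by
  constructor
  · intro n h; simp [Nat.even_add_one, h]
  · intro n h; simp [Nat.even_add_one, h]


lemma exchange {T F : SimpleGraph V} (hT : T.IsTree) (c p : Sym2 V → ℝ)
    {M : SimpleGraph V} (hM : IsSpanningTreeOf (T ⊔ F) M)
    (hMmin : ∀ M'' : SimpleGraph V, IsSpanningTreeOf (T ⊔ F) M'' →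
      weight T c p M ≤ weight T c p M'')
    {E' : Set (Sym2 V)} (hE' : E' ⊆ M.edgeSet \ T.edgeSet) :
    ∃ N : SimpleGraph V, IsSpanningTreeOf (T ⊔ fromEdgeSet E') N ∧
      (∀ M'' : SimpleGraph V, IsSpanningTreeOf (T ⊔ fromEdgeSet E') M'' →
        weight T c p N ≤ weight T c p M'') ∧
      N.edgeSet \ T.edgeSet = E' := by
  classical
  set G' := T ⊔ fromEdgeSet E' with hG'
  have hE'M : E' ⊆ M.edgeSet := fun e he => (hE' he).1
  have hE'T : ∀ e ∈ E', e ∉ T.edgeSet := fun e he => (hE' he).2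
  have hF'edge : (fromEdgeSet E').edgeSet = E' := by
    rw [edgeSet_fromEdgeSet]
    ext z
    simp only [Set.mem_diff, Set.mem_setOf_eq, and_iff_left_iff_imp]
    exact fun hz => M.not_isDiag_of_mem_edgeSet (hE'M hz)
  have hG'edge : G'.edgeSet = T.edgeSet ∪ E' := by
    rw [hG', edgeSet_sup, hF'edge]
  have hMTF : M.edgeSet ⊆ (T ⊔ F).edgeSet := edgeSet_subset_edgeSet.mpr hM.1
  have hG'le : G' ≤ T ⊔ F := by
    rw [← edgeSet_subset_edgeSet, hG'edge]
    rintro z (hz | hz)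
    · rw [edgeSet_sup]; exact Or.inl hz
    · exact hMTF (hE'M hz)
  have hTst : IsSpanningTreeOf G' T := ⟨le_sup_left, hT⟩
  obtain ⟨N₀, hN₀, hN₀min⟩ := Set.exists_min_image
    {N : SimpleGraph V | IsSpanningTreeOf G' N} (weight T c p) (Set.toFinite _) ⟨T, hTst⟩
  obtain ⟨N, hNmem, hNmax⟩ := Set.exists_max_image
    {N : SimpleGraph V | IsSpanningTreeOf G' N ∧ ∀ M'' : SimpleGraph V,
      IsSpanningTreeOf G' M'' → weight T c p N ≤ weight T c p M''}
    (fun N => (N.edgeSet ∩ E').toFinite.toFinset.card) (Set.toFinite _)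
    ⟨N₀, hN₀, fun M'' h'' => hN₀min M'' h''⟩
  obtain ⟨hNst, hNmin⟩ := hNmem
  have hNG' : N.edgeSet ⊆ G'.edgeSet := edgeSet_subset_edgeSet.mpr hNst.1
  have hsub : E' ⊆ N.edgeSet := by
    by_contra hcon
    rw [Set.not_subset] at hcon
    obtain ⟨e, heE', heN⟩ := hcon
    revert heE' heN
    induction e using Sym2.ind with | _ u v => ?_
    intro heE' heN
    have hMadj : M.Adj u v := M.mem_edgeSet.mp (hE'M heE')
    have huv : u ≠ v := hMadj.ne
    have hMbr : ¬(M.deleteEdges {s(u,v)}).Reachable u v :=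
      (isBridge_iff.mp (isAcyclic_iff_forall_edge_isBridge.mp hM.2.IsAcyclic
        (M.mem_edgeSet.mpr hMadj)))
    set S := {z | (M.deleteEdges {s(u,v)}).Reachable u z} with hS
    have huS : u ∈ S := Reachable.refl _
    have hvS : v ∉ S := hMbr
    obtain ⟨W, hWp, -⟩ := (hNst.2.isConnected.preconnected u v).exists_path_of_dist
    obtain ⟨x, y, hxy, W1, W2, hxS, hyS, hWE⟩ := exists_crossing_edge W huS hvS
    have hfN : s(x,y) ∈ N.edgeSet := N.mem_edgeSet.mpr hxy
    have hxyne : x ≠ y := hxy.ne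
    have hfM : s(x,y) ∉ M.edgeSet := by
      intro hmem
      have hfe : s(x,y) ≠ s(u,v) := by
        intro hh
        rw [Sym2.eq_iff] at hh
        rcases hh with ⟨rfl, rfl⟩ | ⟨rfl, rfl⟩
        · exact heN hfN
        · exact hMbr hxS
      have hadjdel : (M.deleteEdges {s(u,v)}).Adj x y := by
        rw [deleteEdges_adj]
        exact ⟨M.mem_edgeSet.mp hmem, by simpa using hfe⟩
      exact hyS (hxS.trans hadjdel.reachable)
    have hsepxy : ¬(M.deleteEdges {s(u,v)}).Reachable x y := fun h => hyS (hxS.trans h)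
    obtain ⟨hM'tree, hM'edge⟩ := swap_isTree hM.2 hMadj hxyne hfM hsepxy
    have hM'le : (M.deleteEdges {s(u,v)} ⊔ fromEdgeSet {s(x,y)}) ≤ T ⊔ F := by
      rw [← edgeSet_subset_edgeSet, hM'edge]
      rintro z (⟨hz, -⟩ | hz)
      · exact hMTF hz
      · rw [Set.mem_singleton_iff] at hz
        subst hz
        exact edgeSet_subset_edgeSet.mpr hG'le (hNG' hfN)
    have hwA : weight T c p M ≤ weight T c p (M.deleteEdges {s(u,v)} ⊔ fromEdgeSet {s(x,y)}) :=
      hMmin _ ⟨hM'le, hM'tree⟩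
    have hswapA := weight_swap T c p (M.mem_edgeSet.mpr hMadj) hfM hM'edge
    have hA : wt T c p s(u,v) ≤ wt T c p s(x,y) := by linarith
    -- Claim B : f separates u from v in N
    have hnodup := hWp.edges_nodup
    rw [hWE] at hnodup
    rw [List.nodup_append] at hnodup
    obtain ⟨hnd1, hnd2, hdisj⟩ := hnodup
    have hfW1 : s(x,y) ∉ W1.edges := fun h => hdisj _ h _ List.mem_cons_self rfl
    have hfW2 : s(x,y) ∉ W2.edges := (List.nodup_cons.mp hnd2).1
    have hsepB : ¬(N.deleteEdges {s(x,y)}).Reachable u v := by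
      intro hreach
      have W1' := W1.toDeleteEdges {s(x,y)}
        (fun e' he' => by simp only [Set.mem_singleton_iff]; rintro rfl; exact hfW1 he')
      have W2' := W2.toDeleteEdges {s(x,y)}
        (fun e' he' => by simp only [Set.mem_singleton_iff]; rintro rfl; exact hfW2 he')
      have hNbr : ¬(N.deleteEdges {s(x,y)}).Reachable x y :=
        (isBridge_iff.mp (isAcyclic_iff_forall_edge_isBridge.mp hNst.2.IsAcyclic hfN))
      exact hNbr ((W1'.reverse.reachable.trans hreach).trans W2'.reverse.reachable)
    obtain ⟨hN'tree, hN'edge⟩ := swap_isTree hNst.2 hxy huv heN hsepB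
    set N' := N.deleteEdges {s(x,y)} ⊔ fromEdgeSet {s(u,v)} with hN'def
    have hN'le : N' ≤ G' := by
      rw [← edgeSet_subset_edgeSet, hN'edge]
      rintro z (⟨hz, -⟩ | hz)
      · exact hNG' hz
      · rw [Set.mem_singleton_iff] at hz
        subst hz
        rw [hG'edge]
        exact Or.inr heE'
    have hswapB := weight_swap T c p hfN heN hN'edge
    have hwN'le : weight T c p N' ≤ weight T c p N := by linarith
    have hN'min : ∀ M'' : SimpleGraph V, IsSpanningTreeOf G' M'' →
        weight T c p N' ≤ weight T c p M'' :=
      fun M'' h'' => le_trans hwN'le (hNmin M'' h'')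
    have hcard := hNmax N' ⟨⟨hN'le, hN'tree⟩, hN'min⟩
    have hfE' : s(x,y) ∉ E' := fun h => hfM (hE'M h)
    have hset : (N'.edgeSet ∩ E').toFinite.toFinset
        = insert s(u,v) ((N.edgeSet ∩ E').toFinite.toFinset) := by
      ext z
      simp only [Set.Finite.mem_toFinset, Set.mem_inter_iff, hN'edge, Set.mem_union,
        Set.mem_diff, Set.mem_singleton_iff, Finset.mem_insert]
      constructor
      · rintro ⟨⟨hz, -⟩ | rfl, hzE⟩
        · exact Or.inr ⟨hz, hzE⟩
        · exact Or.inl rfl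
      · rintro (rfl | ⟨hz, hzE⟩)
        · exact ⟨Or.inr rfl, heE'⟩
        · constructor
          · left
            exact ⟨hz, fun hzf => hfE' (hzf ▸ hzE)⟩
          · exact hzE
    rw [hset] at hcard
    have : s(u,v) ∉ (N.edgeSet ∩ E').toFinite.toFinset := by
      simp only [Set.Finite.mem_toFinset, Set.mem_inter_iff]
      exact fun h => heN h.1
    rw [Finset.card_insert_of_notMem this] at hcard
    omega
  refine ⟨N, hNst, hNmin, ?_⟩
  apply Set.Subset.antisymm
  · intro z hz
    have hzG := hNG' hz.1
    rw [hG'edge] at hzG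
    rcases hzG with hzT | hzE
    · exact absurd hzT hz.2
    · exact hzE
  · intro z hz
    exact ⟨hsub hz, hE'T z hz⟩

lemma esum_union_le {w : Sym2 V → ℝ} {s t : Set (Sym2 V)} (h : ∀ e ∈ s ∪ t, 0 ≤ w e) :
    esum w (s ∪ t) ≤ esum w s + esum w t := by
  classical
  rw [esum_eq_sum, esum_eq_sum, esum_eq_sum]
  have hU : (s ∪ t).toFinite.toFinset = s.toFinite.toFinset ∪ t.toFinite.toFinset := by
    ext z; simp [Set.Finite.mem_toFinset]
  rw [hU]
  have := Finset.sum_union_inter (s₁ := s.toFinite.toFinset) (s₂ := t.toFinite.toFinset)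
    (f := w)
  have hnn : 0 ≤ ∑ e ∈ s.toFinite.toFinset ∩ t.toFinite.toFinset, w e := by
    apply Finset.sum_nonneg
    intro e he
    simp only [Finset.mem_inter, Set.Finite.mem_toFinset] at he
    exact h e (Or.inl he.1)
  linarith

lemma esum_zero_fun (s : Set (Sym2 V)) : esum (fun _ => (0:ℝ)) s = 0 := by
  rw [esum_eq_sum]; simp

lemma edgeSet_fromEdgeSet_of_subset {H : SimpleGraph V} {E' : Set (Sym2 V)}
    (h : E' ⊆ H.edgeSet) : (fromEdgeSet E').edgeSet = E' := by
  rw [edgeSet_fromEdgeSet]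
  ext z
  simp only [Set.mem_diff, Set.mem_setOf_eq, and_iff_left_iff_imp]
  exact fun hz => H.not_isDiag_of_mem_edgeSet (h hz)

lemma blueRevenue_le_redCost {T F : SimpleGraph V} (hT : T.IsTree) {c : Sym2 V → ℝ}
    (hc : ∀ e ∈ T.edgeSet, 0 ≤ c e) (p : Sym2 V → ℝ) {M : SimpleGraph V}
    (hst : IsSpanningTreeOf (T ⊔ F) M)
    (hmin : ∀ M'' : SimpleGraph V, IsSpanningTreeOf (T ⊔ F) M'' →
      weight T c p M ≤ weight T c p M'') :
    blueRevenue T p M ≤ redCost T c := by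
  have h1 : weight T c p M ≤ weight T c p T := hmin T ⟨le_sup_left, hT⟩
  have h2 : weight T c p T = redCost T c := by
    rw [weight, Set.inter_self, Set.diff_self, esum_empty, redCost, add_zero]
  have h3 : 0 ≤ esum c (M.edgeSet ∩ T.edgeSet) := esum_nonneg (fun e he => hc e he.2)
  have h4 : weight T c p M = esum c (M.edgeSet ∩ T.edgeSet) + blueRevenue T p M := rfl
  linarith

end StackMSTProof

open StackMSTProof SimpleGraph

/-- Consider a StackMST(γ,Δ) game whose red tree `T`, rooted at
`v0`, has height `h ≥ 1` (every vertex is at depth at most `h` from `v0`). Then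
there is a feasible set `F` of blue edges (total activation cost at most `Δ`) such
that `(V, F)` is a forest of stars and `2h·r(F) ≥ r*`. -/
theorem stackMST_budget_forest_of_stars {V : Type*} [Finite V]
    (T : SimpleGraph V) (hT : T.IsTree)
    (c : Sym2 V → ℝ) (hc : ∀ e ∈ T.edgeSet, 0 ≤ c e)
    (γ : Sym2 V → ℝ) (hγ : ∀ e : Sym2 V, 0 ≤ γ e) (Δ : ℝ) (hΔ : 0 ≤ Δ)
    (v0 : V) (h : ℕ) (hh : 1 ≤ h) (hheight : ∀ v : V, T.dist v0 v ≤ h) :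
    ∃ F : SimpleGraph V, IsBlueSet T F ∧ esum γ F.edgeSet ≤ Δ ∧
      IsForestOfStars F ∧
      gammaOptRevenue T c γ Δ ≤ (2 * h : ℝ) * revenueOf T c F := by
  classical
  have hRed : 0 ≤ redCost T c := esum_nonneg hc
  have hfbdd : ∀ (F : SimpleGraph V) (p : Sym2 V → ℝ),
      BddAbove {r | ∃ M : SimpleGraph V, IsSpanningTreeOf (T ⊔ F) M ∧
        (∀ M' : SimpleGraph V, IsSpanningTreeOf (T ⊔ F) M' →
          weight T c p M ≤ weight T c p M') ∧ r = blueRevenue T p M} := by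
    intro F p
    refine ⟨redCost T c, ?_⟩
    rintro r ⟨M, hst, hmin, rfl⟩
    exact blueRevenue_le_redCost hT hc p hst hmin
  have hfle : ∀ (F : SimpleGraph V) (p : Sym2 V → ℝ),
      followerRevenue T c F p ≤ redCost T c := by
    intro F p
    apply Real.sSup_le ?_ hRed
    rintro r ⟨M, hst, hmin, rfl⟩
    exact blueRevenue_le_redCost hT hc p hst hmin
  have hrbdd : ∀ F : SimpleGraph V, BddAbove {r | ∃ p : Sym2 V → ℝ,
      (∀ e ∈ F.edgeSet, 0 ≤ p e) ∧ r = followerRevenue T c F p} := by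
    intro F
    exact ⟨redCost T c, by rintro r ⟨p, hp, rfl⟩; exact hfle F p⟩
  obtain ⟨F', hF'mem, hF'max⟩ := Set.exists_max_image
    {F' : SimpleGraph V | IsBlueSet T F' ∧ esum γ F'.edgeSet ≤ Δ ∧ IsForestOfStars F'}
    (revenueOf T c) (Set.toFinite _)
    ⟨⊥, bot_le, by rw [edgeSet_bot, esum_empty]; exact hΔ,
      ⟨∅, fun u v hadj => absurd hadj (by simp), fun v _ a ha b hb => by
        simp only [mem_neighborSet, SimpleGraph.bot_adj] at ha⟩⟩
  obtain ⟨hF'blue, hF'bud, hF'star⟩ := hF'mem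
  refine ⟨F', hF'blue, hF'bud, hF'star, ?_⟩
  have hr0 : 0 ≤ revenueOf T c F' := by
    have hupper : followerRevenue T c F' (fun _ => 0) ≤ 0 := by
      rw [followerRevenue]
      apply Real.sSup_le ?_ le_rfl
      rintro r ⟨M, hst, hmin, rfl⟩
      rw [blueRevenue, esum_zero_fun]
    have hlower : (0:ℝ) ≤ followerRevenue T c F' (fun _ => 0) := by
      obtain ⟨M0, hM0, hM0min⟩ := Set.exists_min_image
        {M : SimpleGraph V | IsSpanningTreeOf (T ⊔ F') M} (weight T c (fun _ => 0))
        (Set.toFinite _) ⟨T, le_sup_left, hT⟩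
      have h0 : (0:ℝ) = blueRevenue T (fun _ => 0) M0 := by
        rw [blueRevenue, esum_zero_fun]
      rw [followerRevenue]
      exact le_csSup (hfbdd F' _) ⟨M0, hM0, fun M'' h'' => hM0min M'' h'', h0⟩
    rw [revenueOf]
    exact le_csSup (hrbdd F') ⟨fun _ => 0, fun e _ => le_rfl,
      (le_antisymm hupper hlower).symm⟩
  have hB : 0 ≤ (2 * h : ℝ) * revenueOf T c F' := mul_nonneg (by positivity) hr0
  rw [gammaOptRevenue]
  apply Real.sSup_le ?_ hB
  rintro r ⟨F, hFblue, hFbud, rfl⟩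
  rw [revenueOf]
  apply Real.sSup_le ?_ hB
  rintro r ⟨p, hp, rfl⟩
  rw [followerRevenue]
  apply Real.sSup_le ?_ hB
  rintro r ⟨M, hMst, hMmin, rfl⟩
  have hMT : M.edgeSet ⊆ T.edgeSet ∪ F.edgeSet := by
    have := edgeSet_subset_edgeSet.mpr hMst.1
    rwa [edgeSet_sup] at this
  have hEbF : M.edgeSet \ T.edgeSet ⊆ F.edgeSet := by
    rintro e ⟨he1, he2⟩
    rcases hMT he1 with hh | hh
    · exact absurd hh he2
    · exact hh
  have key : ∀ Q : ℕ → Prop, (∀ n, Q n → ¬ Q (n+1)) →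
      esum p (parentSet M v0 (M.edgeSet \ T.edgeSet) Q) ≤ revenueOf T c F' := by
    intro Q hQ
    have hE'sub : parentSet M v0 (M.edgeSet \ T.edgeSet) Q ⊆ M.edgeSet \ T.edgeSet :=
      parentSet_subset M v0 _ Q
    obtain ⟨N, hNst, hNmin, hNblue⟩ := exchange hT c p hMst hMmin hE'sub
    have hE'F : parentSet M v0 (M.edgeSet \ T.edgeSet) Q ⊆ F.edgeSet :=
      fun e he => hEbF (hE'sub he)
    have hFQedge : (fromEdgeSet (parentSet M v0 (M.edgeSet \ T.edgeSet) Q)).edgeSet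
        = parentSet M v0 (M.edgeSet \ T.edgeSet) Q :=
      edgeSet_fromEdgeSet_of_subset (fun e he => (hE'sub he).1)
    have h1 : esum p (parentSet M v0 (M.edgeSet \ T.edgeSet) Q) = blueRevenue T p N := by
      rw [blueRevenue, hNblue]
    have h2 : blueRevenue T p N
        ≤ followerRevenue T c (fromEdgeSet (parentSet M v0 (M.edgeSet \ T.edgeSet) Q)) p := by
      rw [followerRevenue]
      exact le_csSup (hfbdd _ p) ⟨N, hNst, hNmin, rfl⟩
    have h3 : followerRevenue T c (fromEdgeSet (parentSet M v0 (M.edgeSet \ T.edgeSet) Q)) p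
        ≤ revenueOf T c (fromEdgeSet (parentSet M v0 (M.edgeSet \ T.edgeSet) Q)) := by
      rw [revenueOf]
      refine le_csSup (hrbdd _) ⟨p, ?_, rfl⟩
      intro e he
      rw [hFQedge] at he
      exact hp e (hE'F he)
    have h4 : revenueOf T c (fromEdgeSet (parentSet M v0 (M.edgeSet \ T.edgeSet) Q))
        ≤ revenueOf T c F' := by
      apply hF'max
      refine ⟨?_, ?_, parentSet_forestOfStars hMst.2 v0 _ Q hQ⟩
      · intro a b hadj
        rw [fromEdgeSet_adj] at hadj
        rw [compl_adj]
        exact ⟨hadj.2, fun hTadj => (hE'sub hadj.1).2 (T.mem_edgeSet.mpr hTadj)⟩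
      · rw [hFQedge]
        exact le_trans (esum_mono hE'F (fun e _ => hγ e)) hFbud
    linarith
  have hsplit := parentSet_union hMst.2 v0 (Set.diff_subset (s := M.edgeSet) (t := T.edgeSet))
  have hnn : ∀ e ∈ parentSet M v0 (M.edgeSet \ T.edgeSet) Even
      ∪ parentSet M v0 (M.edgeSet \ T.edgeSet) (¬ Even ·), 0 ≤ p e := by
    intro e he
    rw [← hsplit] at he
    exact hp e (hEbF he)
  have hle := esum_union_le hnn
  have hval : blueRevenue T p M = esum p ((parentSet M v0 (M.edgeSet \ T.edgeSet) Even)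
      ∪ (parentSet M v0 (M.edgeSet \ T.edgeSet) (¬ Even ·))) := by
    rw [blueRevenue, ← hsplit]
  have k1 := key Even (fun n hn hcon => (Nat.even_add_one.mp hcon) hn)
  have k2 := key (¬ Even ·) (fun n hn hcon => hcon (Nat.even_add_one.mpr hn))
  have h2h : (2:ℝ) * revenueOf T c F' ≤ (2 * h : ℝ) * revenueOf T c F' := by
    apply mul_le_mul_of_nonneg_right ?_ hr0
    have h1le : (1:ℝ) ≤ (h:ℝ) := by exact_mod_cast hh
    linarith
  linarith
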